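/- arXiv:2101.06698 — 5 statements merged into one kernel-verified Lean document; each statement's English description precedes it below -/
import Mathlib

section
/- Let r₁, r₂, τ₀ > 0 with r₁ + r₂ > 0 and r₂ > 0, and let Γ : [0,τ₀] × ℝ → [0,∞) be measurable with ∫₀^{τ₀}∫_ℝ Γ(τ,y) dy dτ = 1 and ∫₀^{τ₀}∫_ℝ Γ(τ,y) e^{py+qτ} dy dτ < ∞ for all p,q ∈ ℝ. Define Δ(λ,p) = −λ + p² + r₁ + r₂ ∫₀^{τ₀}∫_ℝ Γ(τ,y) e^{py − λτ} dy dτ. Then for each p ∈ ℝ there exists a unique λ(p) ∈ ℝ with Δ(λ(p), p) = 0. -/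
open Real MeasureTheory

/-- For each `p` there is a unique `λ` with `Δ(λ,p) = 0`, where
`Δ(λ,p) = −λ + p² + r₁ + r₂ ∫∫ Γ(τ,y) e^{py − λτ} dy dτ`. -/
theorem exists_unique_lambda (r₁ r₂ τ₀ : ℝ) (hτ₀ : 0 < τ₀) (hr₂ : 0 < r₂)
    (hr : 0 < r₁ + r₂)
    (Γ : ℝ → ℝ → ℝ)
    (hΓmeas : Measurable (Function.uncurry Γ))
    (hΓnonneg : ∀ τ y, 0 ≤ Γ τ y)
    (hΓsupp : ∀ τ y, τ ∉ Set.Icc 0 τ₀ → Γ τ y = 0)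
    (hΓint : ∀ p q : ℝ, Integrable
      (fun z : ℝ × ℝ => Γ z.1 z.2 * Real.exp (p * z.2 + q * z.1)))
    (hΓprob : (∫ z : ℝ × ℝ, Γ z.1 z.2) = 1)
    (Δ : ℝ → ℝ → ℝ)
    (hΔ : ∀ lam p, Δ lam p =
      -lam + p ^ 2 + r₁ + r₂ * ∫ z : ℝ × ℝ, Γ z.1 z.2 * Real.exp (p * z.2 - lam * z.1)) :
    ∀ p : ℝ, ∃! lam : ℝ, Δ lam p = 0 := by
  intro p
  -- integrability for every λ
  have hint : ∀ lam : ℝ, Integrable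
      (fun z : ℝ × ℝ => Γ z.1 z.2 * Real.exp (p * z.2 - lam * z.1)) := by
    intro lam
    simpa [sub_eq_add_neg, neg_mul] using hΓint p (-lam)
  set F : ℝ → ℝ := fun lam => ∫ z : ℝ × ℝ, Γ z.1 z.2 * Real.exp (p * z.2 - lam * z.1)
    with hF
  have hFnonneg : ∀ lam, 0 ≤ F lam := fun lam =>
    integral_nonneg fun z => mul_nonneg (hΓnonneg _ _) (Real.exp_pos _).le
  -- F is antitone
  have hFanti : ∀ a b : ℝ, a ≤ b → F b ≤ F a := by
    intro a b hab
    refine integral_mono (hint b) (hint a) fun z => ?_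
    rcases eq_or_ne (Γ z.1 z.2) 0 with h | h
    · simp [h]
    · have hz : z.1 ∈ Set.Icc 0 τ₀ := by
        by_contra hc; exact h (hΓsupp _ _ hc)
      have hle : p * z.2 - b * z.1 ≤ p * z.2 - a * z.1 := by nlinarith [hz.1]
      exact mul_le_mul_of_nonneg_left (Real.exp_le_exp.mpr hle) (hΓnonneg _ _)
  -- Δ(·,p) is strictly antitone
  have hanti : ∀ a b : ℝ, a < b → Δ b p < Δ a p := by
    intro a b hab
    rw [hΔ, hΔ]
    have h1 := hFanti a b hab.le
    nlinarith
  -- Δ(·,p) is continuous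
  have hFc : Continuous F := by
    rw [continuous_iff_continuousAt]
    intro lam₀
    have hbound_int : Integrable
        (fun z : ℝ × ℝ => Real.exp ((|lam₀| + 1) * τ₀) *
          (Γ z.1 z.2 * Real.exp (p * z.2 + 0 * z.1))) :=
      (hΓint p 0).const_mul _
    refine continuousAt_of_dominated
      (Filter.Eventually.of_forall fun lam => (hint lam).aestronglyMeasurable)
      ?_ hbound_int
      (Filter.Eventually.of_forall fun z => ?_)
    · rw [Metric.eventually_nhds_iff]
      refine ⟨1, one_pos, fun lam hlam => Filter.Eventually.of_forall fun z => ?_⟩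
      have hlam' : |lam| ≤ |lam₀| + 1 := by
        have := abs_sub_abs_le_abs_sub lam lam₀
        rw [Real.dist_eq] at hlam
        linarith [hlam.le]
      rw [Real.norm_eq_abs, abs_of_nonneg (mul_nonneg (hΓnonneg _ _) (Real.exp_pos _).le)]
      rcases eq_or_ne (Γ z.1 z.2) 0 with h | h
      · simp only [h, zero_mul]
        positivity
      · have hz : z.1 ∈ Set.Icc 0 τ₀ := by
          by_contra hc; exact h (hΓsupp _ _ hc)
        have h1 : -lam * z.1 ≤ (|lam₀| + 1) * τ₀ := by
          calc -lam * z.1 ≤ |lam| * z.1 := by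
                have := neg_abs_le lam
                nlinarith [hz.1]
            _ ≤ (|lam₀| + 1) * τ₀ := by nlinarith [hz.1, hz.2, abs_nonneg lam₀]
        have : p * z.2 - lam * z.1 ≤ (|lam₀| + 1) * τ₀ + (p * z.2 + 0 * z.1) := by
          nlinarith
        calc Γ z.1 z.2 * Real.exp (p * z.2 - lam * z.1)
            ≤ Γ z.1 z.2 * Real.exp ((|lam₀| + 1) * τ₀ + (p * z.2 + 0 * z.1)) :=
              mul_le_mul_of_nonneg_left (Real.exp_le_exp.mpr this) (hΓnonneg _ _)
          _ = Real.exp ((|lam₀| + 1) * τ₀) * (Γ z.1 z.2 * Real.exp (p * z.2 + 0 * z.1)) := by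
              rw [Real.exp_add]; ring
    · exact (Continuous.continuousAt (by fun_prop))
  have hΔeq : (fun lam => Δ lam p) =
      fun lam => -lam + p ^ 2 + r₁ + r₂ * F lam := funext fun lam => hΔ lam p
  have hcont : Continuous (fun lam => Δ lam p) := by
    rw [hΔeq]; fun_prop
  -- existence via IVT
  set a : ℝ := p ^ 2 + r₁ - 1 with ha
  set b : ℝ := max 0 (p ^ 2 + r₁ + r₂ * F 0) + 1 with hb
  have hΔa : 0 < Δ a p := by
    rw [hΔ]
    have := hFnonneg a
    nlinarith
  have hΔb : Δ b p < 0 := by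
    rw [hΔ]
    have h0b : (0 : ℝ) ≤ b := by
      rw [hb]; positivity
    have h1 : F b ≤ F 0 := hFanti 0 b h0b
    have h2 : p ^ 2 + r₁ + r₂ * F 0 ≤ max 0 (p ^ 2 + r₁ + r₂ * F 0) := le_max_right _ _
    nlinarith
  have hab : a < b := by
    by_contra hc
    push_neg at hc
    rcases eq_or_lt_of_le hc with h | h
    · rw [h] at hΔb; linarith
    · linarith [hanti b a h]
  have hmem : (0 : ℝ) ∈ Set.Icc (Δ b p) (Δ a p) := ⟨hΔb.le, hΔa.le⟩
  obtain ⟨lam, _, hlam⟩ := intermediate_value_Icc' hab.le hcont.continuousOn hmem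
  have hlam' : Δ lam p = 0 := hlam
  refine ⟨lam, hlam', fun y hy => ?_⟩
  rcases lt_trichotomy y lam with h | h | h
  · have := hanti y lam h; rw [hy, hlam'] at this; linarith
  · exact h
  · have := hanti lam y h; rw [hy, hlam'] at this; linarith
end

section
/- Under the hypotheses defining λ(p) implicitly by Δ(λ(p),p) = 0 where Δ(λ,p) = −λ + p² + r₁ + r₂∫₀^{τ₀}∫_ℝ Γ(τ,y)e^{py−λτ} dy dτ with Γ symmetric in y (Γ(τ,y) = Γ(τ,−y)): the function p ↦ λ(p) is even and strictly convex on ℝ. -/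
open Real MeasureTheory

/-- If `λ(p)` is defined implicitly by `Δ(λ(p),p) = 0` with
`Δ(λ,p) = −λ + p² + r₁ + r₂ ∫∫ Γ(τ,y) e^{py − λτ} dy dτ` and `Γ` symmetric in `y`,
then `p ↦ λ(p)` is even and strictly convex. -/
theorem lambda_even_strictConvex (r₁ r₂ τ₀ : ℝ) (hτ₀ : 0 < τ₀) (hr₂ : 0 ≤ r₂)
    (hr : 0 < r₁ + r₂)
    (Γ : ℝ → ℝ → ℝ)
    (hΓmeas : Measurable (Function.uncurry Γ))
    (hΓnonneg : ∀ τ y, 0 ≤ Γ τ y)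
    (hΓsupp : ∀ τ y, τ ∉ Set.Icc 0 τ₀ → Γ τ y = 0)
    (hΓsymm : ∀ τ y, Γ τ (-y) = Γ τ y)
    (hΓint : ∀ p q : ℝ, Integrable
      (fun z : ℝ × ℝ => Γ z.1 z.2 * Real.exp (p * z.2 + q * z.1)))
    (hΓprob : (∫ z : ℝ × ℝ, Γ z.1 z.2) = 1)
    (Δ : ℝ → ℝ → ℝ)
    (hΔ : ∀ lam p, Δ lam p =
      -lam + p ^ 2 + r₁ + r₂ * ∫ z : ℝ × ℝ, Γ z.1 z.2 * Real.exp (p * z.2 - lam * z.1))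
    (lam : ℝ → ℝ) (hlam : ∀ p, Δ (lam p) p = 0) :
    (∀ p, lam (-p) = lam p) ∧ StrictConvexOn ℝ Set.univ lam := by
  -- integrability of the integrand for every (p, μ)
  have hint : ∀ p μ : ℝ, Integrable
      (fun z : ℝ × ℝ => Γ z.1 z.2 * Real.exp (p * z.2 - μ * z.1)) := by
    intro p μ
    have := hΓint p (-μ)
    simpa [sub_eq_add_neg, neg_mul] using this
  -- monotonicity of the integral in μ
  have hmono : ∀ (x : ℝ) {μ ν : ℝ}, μ ≤ ν →
      (∫ z : ℝ × ℝ, Γ z.1 z.2 * Real.exp (x * z.2 - ν * z.1)) ≤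
      (∫ z : ℝ × ℝ, Γ z.1 z.2 * Real.exp (x * z.2 - μ * z.1)) := by
    intro x μ ν hμν
    refine integral_mono (hint x ν) (hint x μ) ?_
    intro z
    by_cases hz : Γ z.1 z.2 = 0
    · simp [hz]
    · have hτ : z.1 ∈ Set.Icc 0 τ₀ := by
        by_contra h
        exact hz (hΓsupp z.1 z.2 h)
      have h0 : 0 ≤ z.1 := hτ.1
      have hle : x * z.2 - ν * z.1 ≤ x * z.2 - μ * z.1 := by nlinarith
      exact mul_le_mul_of_nonneg_left (Real.exp_le_exp.2 hle) (hΓnonneg _ _)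
  -- Δ is antitone in its first argument
  have hanti : ∀ (x : ℝ) {μ ν : ℝ}, μ ≤ ν → Δ ν x ≤ Δ μ x := by
    intro x μ ν h
    rw [hΔ, hΔ]
    have h1 := hmono x h
    have h2 := mul_le_mul_of_nonneg_left h1 hr₂
    linarith
  have hstrict : ∀ (x : ℝ) {μ ν : ℝ}, μ < ν → Δ ν x < Δ μ x := by
    intro x μ ν h
    rw [hΔ, hΔ]
    have h1 := hmono x h.le
    have h2 := mul_le_mul_of_nonneg_left h1 hr₂
    linarith
  -- uniqueness of the root of Δ(·, x)
  have huniq : ∀ x a b, Δ a x = 0 → Δ b x = 0 → a = b := by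
    intro x a b ha hb
    rcases lt_trichotomy a b with h | h | h
    · have := hstrict x h; rw [ha, hb] at this; linarith
    · exact h
    · have := hstrict x h; rw [ha, hb] at this; linarith
  -- evenness of the integral in p (substitution y ↦ -y)
  have hIeven : ∀ p μ : ℝ,
      (∫ z : ℝ × ℝ, Γ z.1 z.2 * Real.exp (-p * z.2 - μ * z.1)) =
      (∫ z : ℝ × ℝ, Γ z.1 z.2 * Real.exp (p * z.2 - μ * z.1)) := by
    intro p μ
    have h1 := hint p μ
    have h2 := hint (-p) μ
    rw [Measure.volume_eq_prod] at h1 h2 ⊢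
    rw [integral_prod _ h1, integral_prod _ h2]
    refine integral_congr_ae (Filter.Eventually.of_forall fun τ => ?_)
    have : (∫ y : ℝ, Γ τ (-y) * Real.exp (p * (-y) - μ * τ)) =
        ∫ y : ℝ, Γ τ y * Real.exp (p * y - μ * τ) :=
      integral_neg_eq_self (fun y => Γ τ y * Real.exp (p * y - μ * τ)) volume
    calc (∫ y, Γ τ y * Real.exp (-p * y - μ * τ))
        = ∫ y, Γ τ (-y) * Real.exp (p * (-y) - μ * τ) := by
          refine integral_congr_ae (Filter.Eventually.of_forall fun y => ?_)
          dsimp only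
          rw [hΓsymm, show p * (-y) = -p * y by ring]
      _ = ∫ y, Γ τ y * Real.exp (p * y - μ * τ) := this
  -- evenness of lam
  have heven : ∀ p, lam (-p) = lam p := by
    intro p
    refine huniq (-p) (lam (-p)) (lam p) (hlam (-p)) ?_
    have := hlam p
    rw [hΔ] at this ⊢
    rw [hIeven p (lam p)]
    linarith [this, sq_abs p]
  refine ⟨heven, convex_univ, ?_⟩
  intro p _ q _ hpq a b ha hb hab
  simp only [smul_eq_mul]
  set x := a * p + b * q with hx
  set μ := a * lam p + b * lam q with hμ
  -- Goal : lam x < μ.  Show Δ μ x < 0 first.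
  -- convexity of exp inside the integral
  have hintx := hint x μ
  have hintp := hint p (lam p)
  have hintq := hint q (lam q)
  have hIconv : (∫ z : ℝ × ℝ, Γ z.1 z.2 * Real.exp (x * z.2 - μ * z.1)) ≤
      a * (∫ z : ℝ × ℝ, Γ z.1 z.2 * Real.exp (p * z.2 - lam p * z.1)) +
      b * (∫ z : ℝ × ℝ, Γ z.1 z.2 * Real.exp (q * z.2 - lam q * z.1)) := by
    rw [← integral_const_mul, ← integral_const_mul, ← integral_add
      (hintp.const_mul a) (hintq.const_mul b)]
    refine integral_mono hintx ((hintp.const_mul a).add (hintq.const_mul b)) ?_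
    intro z
    have hexp : Real.exp (a * (p * z.2 - lam p * z.1) + b * (q * z.2 - lam q * z.1)) ≤
        a * Real.exp (p * z.2 - lam p * z.1) + b * Real.exp (q * z.2 - lam q * z.1) := by
      have := convexOn_exp.2 (Set.mem_univ (p * z.2 - lam p * z.1))
        (Set.mem_univ (q * z.2 - lam q * z.1)) ha.le hb.le hab
      simpa [smul_eq_mul] using this
    have harg : x * z.2 - μ * z.1 =
        a * (p * z.2 - lam p * z.1) + b * (q * z.2 - lam q * z.1) := by
      rw [hx, hμ]; ring
    dsimp only
    rw [harg]
    calc Γ z.1 z.2 * Real.exp (a * (p * z.2 - lam p * z.1) + b * (q * z.2 - lam q * z.1))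
        ≤ Γ z.1 z.2 * (a * Real.exp (p * z.2 - lam p * z.1)
            + b * Real.exp (q * z.2 - lam q * z.1)) :=
          mul_le_mul_of_nonneg_left hexp (hΓnonneg _ _)
      _ = a * (Γ z.1 z.2 * Real.exp (p * z.2 - lam p * z.1))
            + b * (Γ z.1 z.2 * Real.exp (q * z.2 - lam q * z.1)) := by ring
  -- strict convexity of the square
  have hsq : x ^ 2 < a * p ^ 2 + b * q ^ 2 := by
    have hb1 : b = 1 - a := by linarith
    have h1 : a * p ^ 2 + b * q ^ 2 - x ^ 2 = a * b * (p - q) ^ 2 := by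
      rw [hx, hb1]; ring
    have h2 : 0 < a * b * (p - q) ^ 2 :=
      mul_pos (mul_pos ha hb) (sq_pos_of_ne_zero (sub_ne_zero.mpr hpq))
    linarith
  -- Δ μ x < 0
  have hΔneg : Δ μ x < 0 := by
    have hp := hlam p
    have hq := hlam q
    rw [hΔ] at hp hq ⊢
    have h2 := mul_le_mul_of_nonneg_left hIconv hr₂
    nlinarith [hp, hq, h2, hsq]
  -- conclude lam x < μ
  by_contra hcon
  push_neg at hcon
  have := hanti x hcon
  rw [hlam x] at this
  linarith
end

section
/- Let H : ℝ³ → ℝ be continuous in (q,p) for each s, strictly increasing in q with ∂_q H ≥ 1, and define H̃(s,p) by H(s,−H̃(s,p),p) = 0. Let H_*(s,q,p) = liminf_{(s',q',p')→(s,q,p)} H(s',q',p') and H̃_*(s,p) = liminf_{(s',p')→(s,p)} H̃(s',p'). Then H_*(s₀,q₀,p₀) ≤ 0 if and only if q₀ + H̃_*(s₀,p₀) ≤ 0. -/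
open Filter Topology

theorem ereal_aux_lt (a : ℝ) (x : EReal) (h : 0 < (a : EReal) + x) :
    ((-a : ℝ) : EReal) < x := by
  induction x using EReal.rec with
  | bot => simp [EReal.add_bot] at h
  | coe r =>
    rw [← EReal.coe_add] at h
    norm_cast at h ⊢
    linarith
  | top => exact lt_top_iff_ne_top.mpr (by simp)

theorem ereal_aux_le (a : ℝ) (x : EReal) (h : (a : EReal) + x ≤ 0) :
    x ≤ ((-a : ℝ) : EReal) := by
  induction x using EReal.rec with
  | bot => exact bot_le
  | coe r =>
    rw [← EReal.coe_add] at h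
    norm_cast at h ⊢
    linarith
  | top => simp [EReal.coe_add_top] at h

/-- Lower-envelope compatibility: if `H` is continuous in `(q,p)` for each `s`,
increasing in `q` with increments at least `q₂ − q₁`, and `H̃` is defined by
`H(s, −H̃(s,p), p) = 0`, then `H_*(s₀,q₀,p₀) ≤ 0 ↔ q₀ + H̃_*(s₀,p₀) ≤ 0`,
where `H_*` and `H̃_*` are the lower semicontinuous envelopes (joint liminf). -/
theorem lower_envelope_compat
    (H : ℝ → ℝ → ℝ → ℝ)
    (hHcont : ∀ s, Continuous (fun qp : ℝ × ℝ => H s qp.1 qp.2))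
    (hHmono : ∀ s p q₁ q₂, q₁ ≤ q₂ → H s q₁ p + (q₂ - q₁) ≤ H s q₂ p)
    (Ht : ℝ → ℝ → ℝ) (hHt : ∀ s p, H s (-(Ht s p)) p = 0)
    (Hstar : ℝ → ℝ → ℝ → EReal)
    (hHstar : ∀ s q p, Hstar s q p =
      Filter.liminf (fun z : ℝ × ℝ × ℝ => ((H z.1 z.2.1 z.2.2 : ℝ) : EReal))
        (𝓝 (s, q, p)))
    (Htstar : ℝ → ℝ → EReal)
    (hHtstar : ∀ s p, Htstar s p =
      Filter.liminf (fun z : ℝ × ℝ => ((Ht z.1 z.2 : ℝ) : EReal)) (𝓝 (s, p))) :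
    ∀ s₀ q₀ p₀ : ℝ,
      Hstar s₀ q₀ p₀ ≤ 0 ↔ (q₀ : EReal) + Htstar s₀ p₀ ≤ 0 := by
  -- pointwise comparison lemmas
  have keyA : ∀ s p q, q + Ht s p ≤ 0 → H s q p ≤ q + Ht s p := by
    intro s p q hq
    have := hHmono s p q (-(Ht s p)) (by linarith)
    rw [hHt s p] at this
    linarith
  have keyB : ∀ s p q, 0 ≤ q + Ht s p → q + Ht s p ≤ H s q p := by
    intro s p q hq
    have := hHmono s p (-(Ht s p)) q (by linarith)
    rw [hHt s p] at this
    linarith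
  intro s₀ q₀ p₀
  rw [hHstar, hHtstar]
  set L : EReal := Filter.liminf (fun z : ℝ × ℝ => ((Ht z.1 z.2 : ℝ) : EReal)) (𝓝 (s₀, p₀))
    with hL
  constructor
  · -- ⇒ : contrapositive
    intro hlim
    by_contra hc
    push_neg at hc
    -- 0 < q₀ + L, so -q₀ < L
    have hlt : ((-q₀ : ℝ) : EReal) < L := ereal_aux_lt q₀ L hc
    obtain ⟨c, hc1, hc2⟩ := EReal.exists_between_coe_real hlt
    have hq₀c : -q₀ < c := by exact_mod_cast hc1
    -- eventually Ht > c near (s₀, p₀)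
    have hev : ∀ᶠ z : ℝ × ℝ in 𝓝 (s₀, p₀), (c : EReal) < ((Ht z.1 z.2 : ℝ) : EReal) :=
      Filter.eventually_lt_of_lt_liminf hc2
    set δ : ℝ := (q₀ + c) / 2 with hδ
    have hδpos : 0 < δ := by simp [hδ]; linarith
    -- eventually H ≥ δ near (s₀, q₀, p₀)
    have hev' : ∀ᶠ z : ℝ × ℝ × ℝ in 𝓝 (s₀, q₀, p₀),
        ((δ : ℝ) : EReal) ≤ ((H z.1 z.2.1 z.2.2 : ℝ) : EReal) := by
      have h1 : ∀ᶠ z : ℝ × ℝ × ℝ in 𝓝 (s₀, q₀, p₀), c < Ht z.1 z.2.2 := by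
        have hcont : ContinuousAt (fun z : ℝ × ℝ × ℝ => (z.1, z.2.2)) (s₀, q₀, p₀) := by
          fun_prop
        have := hcont.tendsto.eventually (p := fun w : ℝ × ℝ => c < Ht w.1 w.2)
          (by filter_upwards [hev] with w hw using by exact_mod_cast hw)
        exact this
      have h2 : ∀ᶠ z : ℝ × ℝ × ℝ in 𝓝 (s₀, q₀, p₀), q₀ - δ < z.2.1 := by
        have hcont : ContinuousAt (fun z : ℝ × ℝ × ℝ => z.2.1) (s₀, q₀, p₀) := by fun_prop
        exact hcont.tendsto.eventually (eventually_gt_nhds (by linarith))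
      filter_upwards [h1, h2] with z hz1 hz2
      have hge : 0 ≤ z.2.1 + Ht z.1 z.2.2 := by simp [hδ] at hz2 ⊢; linarith
      have := keyB z.1 z.2.2 z.2.1 hge
      have hHδ : δ ≤ H z.1 z.2.1 z.2.2 := by simp [hδ] at hz2 ⊢; linarith
      exact_mod_cast hHδ
    have : ((δ : ℝ) : EReal) ≤ Filter.liminf
        (fun z : ℝ × ℝ × ℝ => ((H z.1 z.2.1 z.2.2 : ℝ) : EReal)) (𝓝 (s₀, q₀, p₀)) :=
      Filter.le_liminf_of_le (by isBoundedDefault) hev'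
    have : ((δ : ℝ) : EReal) ≤ 0 := this.trans hlim
    have : δ ≤ 0 := by exact_mod_cast this
    linarith
  · -- ⇐
    intro h
    -- L ≤ -q₀
    have hLle : L ≤ ((-q₀ : ℝ) : EReal) := ereal_aux_le q₀ L h
    apply Filter.liminf_le_of_frequently_le'
    rw [Filter.frequently_iff]
    intro U hU
    -- get a product neighborhood inside U
    rw [nhds_prod_eq, nhds_prod_eq] at hU
    obtain ⟨A, hA, BC, hBC, hsub⟩ := Filter.mem_prod_iff.mp hU
    obtain ⟨B, hB, C, hC, hsub2⟩ := Filter.mem_prod_iff.mp hBC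
    obtain ⟨δ, hδpos, hball⟩ := Metric.mem_nhds_iff.mp hB
    -- find (s,p) near (s₀,p₀) with Ht s p < -q₀ + δ/2
    have hlt : L < ((-q₀ + δ / 2 : ℝ) : EReal) := by
      refine hLle.trans_lt ?_
      exact_mod_cast (by linarith : -q₀ < -q₀ + δ / 2)
    have hfreq : ∃ᶠ w : ℝ × ℝ in 𝓝 (s₀, p₀),
        ((Ht w.1 w.2 : ℝ) : EReal) < ((-q₀ + δ / 2 : ℝ) : EReal) :=
      Filter.frequently_lt_of_liminf_lt (by isBoundedDefault) hlt
    have hAC : A ×ˢ C ∈ 𝓝 (s₀, p₀) := by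
      rw [nhds_prod_eq]; exact Filter.prod_mem_prod hA hC
    obtain ⟨w, hwAC, hwlt⟩ := Filter.frequently_iff.mp hfreq hAC
    have hwlt' : Ht w.1 w.2 < -q₀ + δ / 2 := by exact_mod_cast hwlt
    refine ⟨(w.1, q₀ - δ / 2, w.2), ?_, ?_⟩
    · apply hsub
      refine ⟨hwAC.1, hsub2 ⟨?_, hwAC.2⟩⟩
      apply hball
      rw [Metric.mem_ball, Real.dist_eq, show q₀ - δ / 2 - q₀ = -(δ / 2) by ring, abs_neg,
        abs_of_pos (by linarith)]
      linarith
    · have hq : (q₀ - δ / 2) + Ht w.1 w.2 ≤ 0 := by linarith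
      have := keyA w.1 w.2 (q₀ - δ / 2) hq
      have : H w.1 (q₀ - δ / 2) w.2 ≤ 0 := by linarith
      exact_mod_cast this
end

section
/- Let ρ : [0,∞) → [0,∞) be continuous and nondecreasing with ρ(0) = 0, and suppose s ↦ ρ(s)/s has no positive local maximum point in (0,∞) (i.e. there is no s₀ > 0 with ρ(s₀)/s₀ > 0 that is a local maximum of s ↦ ρ(s)/s). If additionally limsup_{s→0+} ρ(s)/s < ∞, then lim_{s→∞} ρ(s)/s exists in [0,∞], and if this limit is finite then sup_{s>0} ρ(s)/s ≤ max{limsup_{s→0+} ρ(s)/s, lim_{s→∞} ρ(s)/s} < ∞. -/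
open Real Set Filter Topology

/-- If `ρ ≥ 0` is continuous and nondecreasing on `[0,∞)` with `ρ(0) = 0`, and
`s ↦ ρ(s)/s` has no positive local maximum in `(0,∞)` and is bounded above near `0+`,
then `lim_{s→∞} ρ(s)/s` exists in `[0,∞]`, and when finite,
`sup_{s>0} ρ(s)/s ≤ max{limsup_{s→0+} ρ(s)/s, lim_{s→∞} ρ(s)/s}`. -/
theorem sigma_limit_exists
    (ρ : ℝ → ℝ)
    (hρnonneg : ∀ s, 0 ≤ s → 0 ≤ ρ s)
    (hρcont : ContinuousOn ρ (Set.Ici 0))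
    (hρmono : MonotoneOn ρ (Set.Ici 0))
    (hρ0 : ρ 0 = 0)
    (hnomax : ∀ s₀ : ℝ, 0 < s₀ → 0 < ρ s₀ / s₀ →
      ¬ IsLocalMax (fun s => ρ s / s) s₀)
    (hbdd : ∃ A : ℝ, ∀ᶠ s in 𝓝[>] (0:ℝ), ρ s / s ≤ A) :
    ∃ l : EReal,
      Tendsto (fun s : ℝ => ((ρ s / s : ℝ) : EReal)) atTop (𝓝 l) ∧ 0 ≤ l ∧
      ∀ lr : ℝ, l = (lr : EReal) →
        ∀ s : ℝ, 0 < s →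
          ρ s / s ≤ max (Filter.limsup (fun s => ρ s / s) (𝓝[>] (0:ℝ))) lr := by
  set σ : ℝ → ℝ := fun s => ρ s / s with hσdef
  have hσcont : ContinuousOn σ (Ioi (0:ℝ)) := by
    apply ContinuousOn.div (hρcont.mono (fun x (hx : x ∈ Ioi (0:ℝ)) => Set.mem_Ici.mpr (le_of_lt (Set.mem_Ioi.mp hx)))) continuousOn_id
    intro x hx
    exact ne_of_gt hx
  have hσnonneg : ∀ s, 0 < s → 0 ≤ σ s := fun s hs => div_nonneg (hρnonneg s hs.le) hs.le
  -- quasiconvexity on (0, ∞)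
  have quasi : ∀ a x b : ℝ, 0 < a → a ≤ x → x ≤ b → σ x ≤ max (σ a) (σ b) := by
    intro a x b ha hax hxb
    rcases eq_or_lt_of_le (hax.trans hxb) with hab | hab
    · have : x = a := le_antisymm (hab ▸ hxb) hax
      rw [this]; exact le_max_left _ _
    by_contra h
    push_neg at h
    have hsub : Icc a b ⊆ Ioi (0:ℝ) := fun y hy => lt_of_lt_of_le ha hy.1
    obtain ⟨c, hc, hmax⟩ := isCompact_Icc.exists_isMaxOn ⟨x, hax, hxb⟩ (hσcont.mono hsub)
    have hxc : σ x ≤ σ c := hmax ⟨hax, hxb⟩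
    have hca : a < c := by
      rcases eq_or_lt_of_le hc.1 with h' | h'
      · exfalso
        have : σ c ≤ max (σ a) (σ b) := h' ▸ le_max_left _ _
        exact absurd (hxc.trans this) (not_le.mpr h)
      · exact h'
    have hcb : c < b := by
      rcases eq_or_lt_of_le hc.2 with h' | h'
      · exfalso
        have : σ c ≤ max (σ a) (σ b) := h' ▸ le_max_right _ _
        exact absurd (hxc.trans this) (not_le.mpr h)
      · exact h'
    have hcpos : 0 < c := ha.trans hca
    have hσcpos : 0 < σ c :=
      lt_of_le_of_lt (le_max_of_le_left (hσnonneg a ha)) (lt_of_lt_of_le h hxc)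
    exact hnomax c hcpos hσcpos (hmax.isLocalMax (Icc_mem_nhds hca hcb))
  -- existence of the limit at infinity
  have hlim : ∃ l : EReal,
      Tendsto (fun s : ℝ => ((σ s : ℝ) : EReal)) atTop (𝓝 l) := by
    by_cases hinc : ∃ a b : ℝ, 0 < a ∧ a < b ∧ σ a < σ b
    · obtain ⟨a, b, ha, hab, hσab⟩ := hinc
      have hmono : ∀ x y : ℝ, b ≤ x → x ≤ y → σ x ≤ σ y := by
        intro x y hbx hxy
        have h1 : σ b ≤ σ x :=
          (le_max_iff.mp (quasi a b x ha hab.le hbx)).resolve_left (not_le.mpr hσab)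
        have h2 : σ x ≤ max (σ a) (σ y) := quasi a x y ha (hab.le.trans hbx) hxy
        exact (le_max_iff.mp h2).resolve_left (not_le.mpr (lt_of_lt_of_le hσab h1))
      set g : ℝ → EReal := fun s => ((σ (max s b) : ℝ) : EReal) with hg
      have hgmono : Monotone g := by
        intro s t hst
        exact EReal.coe_le_coe_iff.mpr
          (hmono _ _ (le_max_right s b) (max_le_max hst (le_refl b)))
      refine ⟨⨆ s, g s, (tendsto_atTop_iSup hgmono).congr' ?_⟩
      filter_upwards [eventually_ge_atTop b] with s hs
      simp only [hg, max_eq_left hs]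
    · push_neg at hinc
      have hanti : ∀ x y : ℝ, 0 < x → x ≤ y → σ y ≤ σ x := by
        intro x y hx hxy
        rcases eq_or_lt_of_le hxy with h | h
        · rw [h]
        · exact hinc x y hx h
      set g : ℝ → EReal := fun s => ((σ (max s 1) : ℝ) : EReal) with hg
      have hganti : Antitone g := by
        intro s t hst
        exact EReal.coe_le_coe_iff.mpr
          (hanti _ _ (lt_of_lt_of_le one_pos (le_max_right s 1))
            (max_le_max hst (le_refl 1)))
      refine ⟨⨅ s, g s, (tendsto_atTop_iInf hganti).congr' ?_⟩
      filter_upwards [eventually_ge_atTop (1:ℝ)] with s hs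
      simp only [hg, max_eq_left hs]
  obtain ⟨l, htend⟩ := hlim
  refine ⟨l, htend, ?_, ?_⟩
  · -- nonnegativity of the limit
    refine ge_of_tendsto htend ?_
    filter_upwards [eventually_gt_atTop (0:ℝ)] with s hs
    exact_mod_cast hσnonneg s hs
  · -- the supremum bound
    intro lr hlr s hs
    have hreal : Tendsto σ atTop (𝓝 lr) := by
      rw [hlr] at htend
      exact EReal.tendsto_coe.mp htend
    by_cases hcase : σ s ≤ lr
    · exact hcase.trans (le_max_right _ _)
    push_neg at hcase
    have key : ∀ ε : ℝ, 0 < ε → ε < s → σ s ≤ σ ε := by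
      intro ε hε hεs
      have h1 : ∀ᶠ t in atTop, σ s ≤ max (σ ε) (σ t) := by
        filter_upwards [eventually_ge_atTop s] with t ht
        exact quasi ε s t hε hεs.le ht
      have h2 : Tendsto (fun t => max (σ ε) (σ t)) atTop (𝓝 (max (σ ε) lr)) :=
        tendsto_const_nhds.max hreal
      have h3 : σ s ≤ max (σ ε) lr := ge_of_tendsto h2 h1
      exact (le_max_iff.mp h3).resolve_right (not_le.mpr hcase)
    have hev : ∀ᶠ ε in 𝓝[>] (0:ℝ), σ s ≤ σ ε := by
      filter_upwards [Ioo_mem_nhdsGT_of_mem (⟨le_refl 0, hs⟩ : (0:ℝ) ∈ Ico 0 s)]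
        with ε hε
      exact key ε hε.1 hε.2
    obtain ⟨A, hA⟩ := hbdd
    have hbound : IsBoundedUnder (· ≤ ·) (𝓝[>] (0:ℝ)) σ :=
      isBoundedUnder_of_eventually_le hA
    exact (le_limsup_of_frequently_le hev.frequently hbound).trans (le_max_left _ _)
end

section
/- Let R₁, R₂ : ℝ → ℝ be upper semicontinuous at s₀, locally monotone at s₀ (in the sense of Definition 1.2), with R₁ + R₂ also locally monotone at s₀, and suppose R₂ is piecewise constant near s₀ with a jump R₂(s₀+) > R₂(s₀−). Then R₂(s₀) = R₂(s₀+) and limsup_{s'→s₀} R₁(s') = R₁(s₀); moreover lim_{δ→0} sup{R₁(s₁) − R₁(s₂) : |s_i − s₀| < δ, s₁ < s₂} ≤ 0 (i.e. R₁ is 'locally nondecreasing' at s₀). -/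
open Real Filter Topology

/-- `h` is locally monotone at `s₀` (Definition 1.2 of the paper): either
`lim_{δ→0} inf_{|sᵢ−s₀|<δ, s₁<s₂} (h(s₁)−h(s₂)) ≥ 0` or
`lim_{δ→0} sup_{|sᵢ−s₀|<δ, s₁<s₂} (h(s₁)−h(s₂)) ≤ 0`. -/
def LocallyMonotoneAt (h : ℝ → ℝ) (s₀ : ℝ) : Prop :=
  (∀ ε : ℝ, 0 < ε → ∃ δ : ℝ, 0 < δ ∧ ∀ s₁ s₂ : ℝ,
      |s₁ - s₀| < δ → |s₂ - s₀| < δ → s₁ < s₂ → -ε ≤ h s₁ - h s₂) ∨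
  (∀ ε : ℝ, 0 < ε → ∃ δ : ℝ, 0 < δ ∧ ∀ s₁ s₂ : ℝ,
      |s₁ - s₀| < δ → |s₂ - s₀| < δ → s₁ < s₂ → h s₁ - h s₂ ≤ ε)

/-- If `R₁, R₂` are u.s.c. and locally monotone at `s₀`, `R₁ + R₂` is locally
monotone at `s₀`, and `R₂` is piecewise constant near `s₀` with an upward jump
`R₂(s₀+) = b > a = R₂(s₀−)`, then `R₂(s₀) = b`, `limsup_{s'→s₀} R₁(s') = R₁(s₀)`,
and `R₁` is locally nondecreasing at `s₀`. -/
theorem jump_point_structure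
    (R₁ R₂ : ℝ → ℝ) (s₀ a b δ₁ : ℝ) (hδ₁ : 0 < δ₁) (hab : a < b)
    (hR₁usc : UpperSemicontinuousAt R₁ s₀)
    (hR₂usc : UpperSemicontinuousAt R₂ s₀)
    (hR₁mono : LocallyMonotoneAt R₁ s₀)
    (hsum : LocallyMonotoneAt (fun s => R₁ s + R₂ s) s₀)
    (hleft : ∀ s ∈ Set.Ioo (s₀ - δ₁) s₀, R₂ s = a)
    (hright : ∀ s ∈ Set.Ioo s₀ (s₀ + δ₁), R₂ s = b) :
    R₂ s₀ = b ∧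
    Filter.limsup (fun s => ((R₁ s : ℝ) : EReal)) (𝓝[≠] s₀) = (R₁ s₀ : EReal) ∧
    (∀ ε : ℝ, 0 < ε → ∃ δ : ℝ, 0 < δ ∧ ∀ s₁ s₂ : ℝ,
      |s₁ - s₀| < δ → |s₂ - s₀| < δ → s₁ < s₂ → R₁ s₁ - R₁ s₂ ≤ ε) := by
    -- Step 1 : b ≤ R₂ s₀, from upper semicontinuity of R₂ and the right values.
  have hbR₂ : b ≤ R₂ s₀ := by
    by_contra h
    push_neg at h
    have hev := hR₂usc b h
    rw [Metric.eventually_nhds_iff] at hev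
    obtain ⟨r, hr, hball⟩ := hev
    set s : ℝ := s₀ + min r δ₁ / 2 with hs
    have hmin : 0 < min r δ₁ := lt_min hr hδ₁
    have h1 : s ∈ Set.Ioo s₀ (s₀ + δ₁) := by
      constructor <;> simp only [hs] <;>
        [linarith; linarith [min_le_right r δ₁]]
    have h2 : dist s s₀ < r := by
      rw [Real.dist_eq]
      have : |s - s₀| = min r δ₁ / 2 := by
        have h' : s - s₀ = min r δ₁ / 2 := by rw [hs]; ring
        rw [h', abs_of_pos (by linarith)]
      rw [this]; linarith [min_le_left r δ₁]
    have := hball h2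
    beta_reduce at this
    rw [hright s h1] at this
    exact lt_irrefl b this
  -- Step 2 : the sum satisfies the "nondecreasing" branch.
  have hsum2 : ∀ ε : ℝ, 0 < ε → ∃ δ : ℝ, 0 < δ ∧ ∀ s₁ s₂ : ℝ,
      |s₁ - s₀| < δ → |s₂ - s₀| < δ → s₁ < s₂ →
      (R₁ s₁ + R₂ s₁) - (R₁ s₂ + R₂ s₂) ≤ ε := by
    rcases hsum with h | h
    · exfalso
      obtain ⟨δ, hδ, hmon⟩ := h ((b - a) / 4) (by linarith)
      have hev := hR₁usc (R₁ s₀ + (b - a) / 4) (by linarith)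
      rw [Metric.eventually_nhds_iff] at hev
      obtain ⟨r, hr, hball⟩ := hev
      set m : ℝ := min (min δ r) δ₁ with hm
      have hmpos : 0 < m := lt_min (lt_min hδ hr) hδ₁
      set s : ℝ := s₀ - m / 2 with hs
      have hmδ : m ≤ δ := le_trans (min_le_left _ _) (min_le_left _ _)
      have hmr : m ≤ r := le_trans (min_le_left _ _) (min_le_right _ _)
      have hmδ₁ : m ≤ δ₁ := min_le_right _ _
      have habs : |s - s₀| = m / 2 := by
        have h' : s - s₀ = -(m / 2) := by rw [hs]; ring
        rw [h', abs_neg, abs_of_pos (by linarith)]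
      have hIoo : s ∈ Set.Ioo (s₀ - δ₁) s₀ := by
        constructor <;> simp only [hs] <;> linarith
      have h2a : R₂ s = a := hleft s hIoo
      have hmono := hmon s s₀ (by rw [habs]; linarith)
        (by simp [hδ]) (by simp only [hs]; linarith)
      have husc : R₁ s < R₁ s₀ + (b - a) / 4 := hball (by rw [Real.dist_eq, habs]; linarith)
      simp only at hmono
      rw [h2a] at hmono
      linarith
    · exact fun ε hε => h ε hε
  -- Step 3 : R₂ s₀ ≤ b.
  have hR₂le : R₂ s₀ ≤ b := by
    by_contra h
    push_neg at h
    set c : ℝ := R₂ s₀ with hc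
    obtain ⟨δ, hδ, hmon⟩ := hsum2 ((c - b) / 4) (by linarith)
    have hev := hR₁usc (R₁ s₀ + (c - b) / 2) (by linarith)
    rw [Metric.eventually_nhds_iff] at hev
    obtain ⟨r, hr, hball⟩ := hev
    set m : ℝ := min (min δ r) δ₁ with hm
    have hmpos : 0 < m := lt_min (lt_min hδ hr) hδ₁
    set s : ℝ := s₀ + m / 2 with hs
    have hmδ : m ≤ δ := le_trans (min_le_left _ _) (min_le_left _ _)
    have hmr : m ≤ r := le_trans (min_le_left _ _) (min_le_right _ _)
    have hmδ₁ : m ≤ δ₁ := min_le_right _ _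
    have habs : |s - s₀| = m / 2 := by
      have h' : s - s₀ = m / 2 := by rw [hs]; ring
      rw [h', abs_of_pos (by linarith)]
    have hIoo : s ∈ Set.Ioo s₀ (s₀ + δ₁) := by
      constructor <;> simp only [hs] <;> linarith
    have h2b : R₂ s = b := hright s hIoo
    have hmono := hmon s₀ s (by simp [hδ])
      (by rw [habs]; linarith) (by simp only [hs]; linarith)
    have husc : R₁ s < R₁ s₀ + (c - b) / 2 := hball (by rw [Real.dist_eq, habs]; linarith)
    rw [h2b, ← hc] at hmono
    linarith
  have hR₂eq : R₂ s₀ = b := le_antisymm hR₂le hbR₂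
  -- Step 4 : the third conclusion.
  have key : ∀ ε : ℝ, 0 < ε → ∃ δ : ℝ, 0 < δ ∧ ∀ s₁ s₂ : ℝ,
      |s₁ - s₀| < δ → |s₂ - s₀| < δ → s₁ < s₂ → R₁ s₁ - R₁ s₂ ≤ ε := by
    intro ε hε
    obtain ⟨δ₂, hδ₂, hmon⟩ := hsum2 (ε / 3) (by linarith)
    have hev := hR₁usc (R₁ s₀ + ε / 3) (by linarith)
    rw [Metric.eventually_nhds_iff] at hev
    obtain ⟨r, hr, hball⟩ := hev
    refine ⟨min (min δ₂ r) δ₁, lt_min (lt_min hδ₂ hr) hδ₁, ?_⟩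
    set δ : ℝ := min (min δ₂ r) δ₁ with hδdef
    have hδδ₂ : δ ≤ δ₂ := le_trans (min_le_left _ _) (min_le_left _ _)
    have hδr : δ ≤ r := le_trans (min_le_left _ _) (min_le_right _ _)
    have hδδ₁ : δ ≤ δ₁ := min_le_right _ _
    intro s₁ s₂ h1 h2 h12
    -- R₂ value on the ball:
    have hval : ∀ s : ℝ, |s - s₀| < δ → s₀ ≤ s → R₂ s = b := by
      intro s hsδ hss
      rcases eq_or_lt_of_le hss with h | h
      · rw [← h, hR₂eq]
      · refine hright s ⟨h, ?_⟩
        rw [abs_sub_lt_iff] at hsδ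
        linarith
    have hvala : ∀ s : ℝ, |s - s₀| < δ → s < s₀ → R₂ s = a := by
      intro s hsδ hss
      refine hleft s ⟨?_, hss⟩
      rw [abs_sub_lt_iff] at hsδ
      linarith
    -- Claim B : if s < s₀ and |s - s₀| < δ then R₁ s ≤ R₁ s₀ + 2ε/3
    have claimB : ∀ s : ℝ, |s - s₀| < δ → s < s₀ → R₁ s ≤ R₁ s₀ + 2 * (ε / 3) := by
      intro s hsδ hss
      set t : ℝ := (s + s₀) / 2 with ht
      have hts : s < t := by rw [ht]; linarith
      have hts₀ : t < s₀ := by rw [ht]; linarith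
      have hδpos : 0 < δ := lt_min (lt_min hδ₂ hr) hδ₁
      have htδ : |t - s₀| < δ := by
        rw [abs_sub_lt_iff] at hsδ ⊢
        simp only [ht]
        constructor <;> linarith [hsδ.1, hsδ.2]
      have hmono := hmon s t (lt_of_lt_of_le hsδ hδδ₂) (lt_of_lt_of_le htδ hδδ₂) hts
      rw [hvala s hsδ hss, hvala t htδ hts₀] at hmono
      have husc : R₁ t < R₁ s₀ + ε / 3 :=
        hball (by rw [Real.dist_eq]; exact lt_of_lt_of_le htδ hδr)
      linarith
    rcases lt_or_ge s₂ s₀ with hc2 | hc2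
    · -- both left
      have hmono := hmon s₁ s₂ (lt_of_lt_of_le h1 hδδ₂) (lt_of_lt_of_le h2 hδδ₂) h12
      rw [hvala s₁ h1 (lt_trans h12 hc2), hvala s₂ h2 hc2] at hmono
      linarith
    · rcases lt_or_ge s₁ s₀ with hc1 | hc1
      · -- s₁ left, s₂ at or right of s₀
        have hB := claimB s₁ h1 hc1
        rcases eq_or_lt_of_le hc2 with h | h
        · rw [← h]; linarith
        · have hs₀δ : |s₀ - s₀| < δ := by
            simp only [sub_self, abs_zero]
            exact lt_min (lt_min hδ₂ hr) hδ₁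
          have hmono := hmon s₀ s₂ (lt_of_lt_of_le hs₀δ hδδ₂) (lt_of_lt_of_le h2 hδδ₂) h
          rw [hR₂eq, hval s₂ h2 hc2] at hmono
          linarith
      · -- both at or right of s₀
        have hmono := hmon s₁ s₂ (lt_of_lt_of_le h1 hδδ₂) (lt_of_lt_of_le h2 hδδ₂) h12
        rw [hval s₁ h1 hc1, hval s₂ h2 (le_trans hc1 (le_of_lt h12))] at hmono
        linarith
  -- Step 5 : limsup.
  have hlimsup : Filter.limsup (fun s => ((R₁ s : ℝ) : EReal)) (𝓝[≠] s₀) = (R₁ s₀ : EReal) := by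
    apply le_antisymm
    · by_contra h
      push_neg at h
      obtain ⟨z, hz1, hz2⟩ := EReal.exists_between_coe_real h
      have hz : R₁ s₀ < z := by exact_mod_cast hz1
      have hev : ∀ᶠ s in 𝓝[≠] s₀, ((R₁ s : ℝ) : EReal) ≤ (z : EReal) := by
        apply Filter.Eventually.filter_mono nhdsWithin_le_nhds
        filter_upwards [hR₁usc z hz] with s hs
        exact_mod_cast le_of_lt hs
      have := Filter.limsup_le_of_le (by isBoundedDefault) hev
      exact absurd this (not_le_of_gt hz2)
    · by_contra h
      push_neg at h
      obtain ⟨z, hz1, hz2⟩ := EReal.exists_between_coe_real h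
      have hz : z < R₁ s₀ := by exact_mod_cast hz2
      set ε : ℝ := R₁ s₀ - z with hεdef
      have hε : 0 < ε := by linarith
      obtain ⟨δ, hδ, hmon⟩ := hsum2 ε hε
      have hfreq : ∃ᶠ s in 𝓝[≠] s₀, ((z : ℝ) : EReal) ≤ ((R₁ s : ℝ) : EReal) := by
        have hev : ∀ᶠ s in 𝓝[>] s₀, ((z : ℝ) : EReal) ≤ ((R₁ s : ℝ) : EReal) := by
          have hmem : Set.Ioo s₀ (s₀ + min δ δ₁) ∈ 𝓝[>] s₀ :=
            Ioo_mem_nhdsGT_of_mem ⟨le_refl _, by linarith [lt_min hδ hδ₁]⟩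
          filter_upwards [hmem] with s hs
          have hsδ : |s - s₀| < δ := by
            rw [abs_sub_lt_iff]
            constructor <;> [linarith [hs.1, hs.2, min_le_left δ δ₁]; linarith [hs.1]]
          have hs₀δ : |s₀ - s₀| < δ := by simp [hδ]
          have hmono := hmon s₀ s hs₀δ hsδ hs.1
          have hsb : R₂ s = b := hright s ⟨hs.1, by linarith [hs.2, min_le_right δ δ₁]⟩
          rw [hR₂eq, hsb] at hmono
          rw [EReal.coe_le_coe_iff]
          linarith
        exact (hev.frequently).filter_mono
          (nhdsWithin_mono s₀ (fun x hx => ne_of_gt hx))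
      have := Filter.le_limsup_of_frequently_le hfreq (by isBoundedDefault)
      exact absurd this (not_le_of_gt hz1)
  exact ⟨hR₂eq, hlimsup, key⟩
end
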